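/- Let S ⊆ ℕ² be nonempty and let N := convexHull ℝ (S + σ∨) ⊆ ℝ² be its Newton polygon. Then for every m = (m₁,m₂) ∈ ℝ²: m ∈ N if and only if m₁ ≥ 0, m₂ ≥ 0, and for all real numbers w₁ ≥ 0 and w₂ ≥ 0 one has sInf { w₁·p + w₂·q : (p,q) ∈ S } ≤ w₁·m₁ + w₂·m₂. (The paper's Proposition 7.14: a Newton polygon is reconstructed from its tropical/support function.) -/

import Mathlib

open scoped Pointwise

/-- The nonnegative quadrant `σ∨ = [0,∞)² ⊆ ℝ²`. -/
def quadrant : Set (ℝ × ℝ) := {x | 0 ≤ x.1 ∧ 0 ≤ x.2}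

/-- A subset of `ℕ²` viewed inside `ℝ²`. -/
def toR2 (S : Set (ℕ × ℕ)) : Set (ℝ × ℝ) :=
  (fun pq : ℕ × ℕ => ((pq.1 : ℝ), (pq.2 : ℝ))) '' S

open Set

lemma quadrant_convex : Convex ℝ quadrant := by
  intro x hx y hy a b ha hb hab
  obtain ⟨hx1, hx2⟩ := hx
  obtain ⟨hy1, hy2⟩ := hy
  constructor
  · simpa using add_nonneg (mul_nonneg ha hx1) (mul_nonneg hb hy1)
  · simpa using add_nonneg (mul_nonneg ha hx2) (mul_nonneg hb hy2)

lemma quadrant_closed : IsClosed quadrant := by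
  have : quadrant = {x : ℝ × ℝ | 0 ≤ x.1} ∩ {x : ℝ × ℝ | 0 ≤ x.2} := rfl
  rw [this]
  exact (isClosed_le continuous_const continuous_fst).inter
    (isClosed_le continuous_const continuous_snd)

lemma quadrant_add_quadrant {a b : ℝ × ℝ} (ha : a ∈ quadrant) (hb : b ∈ quadrant) :
    a + b ∈ quadrant :=
  ⟨add_nonneg ha.1 hb.1, add_nonneg ha.2 hb.2⟩

lemma zero_mem_quadrant : (0 : ℝ × ℝ) ∈ quadrant := ⟨le_refl 0, le_refl 0⟩

/-- Every element of `S ⊆ ℕ²` dominates a minimal element of `S`. -/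
lemma exists_minimal_le (S : Set (ℕ × ℕ)) :
    ∀ n (s : ℕ × ℕ), s.1 + s.2 ≤ n → s ∈ S →
      ∃ t ∈ S, t ≤ s ∧ ∀ u ∈ S, u ≤ t → u = t := by
  intro n
  induction n with
  | zero =>
    intro s hs hmem
    refine ⟨s, hmem, le_rfl, fun u hu hus => ?_⟩
    have h1 : u.1 ≤ s.1 := hus.1
    have h2 : u.2 ≤ s.2 := hus.2
    have : u.1 = s.1 ∧ u.2 = s.2 := by omega
    exact Prod.ext this.1 this.2
  | succ n ih =>
    intro s hs hmem
    by_cases h : ∀ u ∈ S, u ≤ s → u = s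
    · exact ⟨s, hmem, le_rfl, h⟩
    · push_neg at h
      obtain ⟨u, huS, hus, hne⟩ := h
      have h1 : u.1 ≤ s.1 := hus.1
      have h2 : u.2 ≤ s.2 := hus.2
      have hne' : ¬(u.1 = s.1 ∧ u.2 = s.2) := fun hc => hne (Prod.ext hc.1 hc.2)
      have hu_le : u.1 + u.2 ≤ n := by omega
      obtain ⟨t, htS, htu, hmin⟩ := ih u hu_le huS
      exact ⟨t, htS, le_trans htu hus, hmin⟩

/-- Dickson's lemma: the set of minimal elements of `S ⊆ ℕ²` is finite. -/
lemma minimals_finite (S : Set (ℕ × ℕ)) :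
    {t ∈ S | ∀ u ∈ S, u ≤ t → u = t}.Finite := by
  have hN : (univ : Set ℕ).IsPWO := (IsWF.of_wellFoundedLT univ).isPWO
  have hP : ((univ : Set ℕ) ×ˢ (univ : Set ℕ)).IsPWO := hN.prod hN
  have hPWO : {t ∈ S | ∀ u ∈ S, u ≤ t → u = t}.IsPWO :=
    hP.mono (fun x _ => ⟨mem_univ _, mem_univ _⟩)
  have hanti : IsAntichain (· ≤ ·) {t ∈ S | ∀ u ∈ S, u ≤ t → u = t} := by
    intro a ha b hb hab hle
    exact hab (hb.2 a ha.1 hle)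
  exact hanti.finite_of_partiallyWellOrderedOn hPWO

/-- a Newton polygon is reconstructed from its tropical (support) function:
`m` lies in `convexHull ℝ (S + σ∨)` iff `m` has nonnegative coordinates and for all weights
`w₁, w₂ ≥ 0` the tropical function value `sInf {w₁·p + w₂·q : (p,q) ∈ S}` is at most
`w₁·m₁ + w₂·m₂`. -/
theorem mem_newtonPolygon_iff_tropical (S : Set (ℕ × ℕ)) (hS : S.Nonempty) (m : ℝ × ℝ) :
    m ∈ convexHull ℝ (toR2 S + quadrant) ↔
      0 ≤ m.1 ∧ 0 ≤ m.2 ∧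
        ∀ w₁ w₂ : ℝ, 0 ≤ w₁ → 0 ≤ w₂ →
          sInf {r : ℝ | ∃ pq ∈ S, r = w₁ * pq.1 + w₂ * pq.2} ≤ w₁ * m.1 + w₂ * m.2 := by
  classical
  set M : Set (ℕ × ℕ) := {t ∈ S | ∀ u ∈ S, u ≤ t → u = t} with hMdef
  have hMS : M ⊆ S := fun t ht => ht.1
  have hMfin : M.Finite := minimals_finite S
  -- every point of toR2 S lies above a point of toR2 M
  have hdom : ∀ s ∈ S, ∃ t ∈ M, (((s.1 : ℝ), (s.2 : ℝ)) : ℝ × ℝ) =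
      ((t.1 : ℝ), (t.2 : ℝ)) + (((s.1 : ℝ) - t.1, (s.2 : ℝ) - t.2)) ∧
      ((((s.1 : ℝ) - t.1, (s.2 : ℝ) - t.2)) : ℝ × ℝ) ∈ quadrant := by
    intro s hs
    obtain ⟨t, htS, hts, hmin⟩ := exists_minimal_le S (s.1 + s.2) s le_rfl hs
    refine ⟨t, ⟨htS, hmin⟩, by simp [Prod.ext_iff], ?_⟩
    constructor
    · simp only [sub_nonneg]
      exact_mod_cast hts.1
    · simp only [sub_nonneg]
      exact_mod_cast hts.2
  -- the hull equals a closed polyhedron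
  have hC_eq : convexHull ℝ (toR2 S + quadrant) = convexHull ℝ (toR2 M) + quadrant := by
    rw [convexHull_add, quadrant_convex.convexHull_eq]
    apply Subset.antisymm
    · have hA : toR2 S ⊆ convexHull ℝ (toR2 M) + quadrant := by
        rintro x ⟨s, hs, rfl⟩
        obtain ⟨t, htM, heq, hq⟩ := hdom s hs
        exact ⟨((t.1 : ℝ), (t.2 : ℝ)), subset_convexHull ℝ _ ⟨t, htM, rfl⟩,
          (((s.1 : ℝ) - t.1, (s.2 : ℝ) - t.2)), hq, heq.symm⟩
      have hconv : Convex ℝ (convexHull ℝ (toR2 M) + quadrant) :=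
        (convex_convexHull ℝ _).add quadrant_convex
      have hhull : convexHull ℝ (toR2 S) ⊆ convexHull ℝ (toR2 M) + quadrant :=
        convexHull_min hA hconv
      rintro x ⟨a, ha, q, hq, rfl⟩
      obtain ⟨a', ha', q', hq', rfl⟩ := hhull ha
      exact ⟨a', ha', q' + q, quadrant_add_quadrant hq' hq, (add_assoc _ _ _).symm⟩
    · exact add_subset_add_right (convexHull_mono (image_mono hMS))
  have hC_closed : IsClosed (convexHull ℝ (toR2 M) + quadrant) :=
    quadrant_closed.add_left_of_isCompact ((hMfin.image _).isCompact_convexHull ℝ)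
  have hC_convex : Convex ℝ (convexHull ℝ (toR2 M) + quadrant) :=
    (convex_convexHull ℝ _).add quadrant_convex
  -- the tropical sets are nonempty and bounded below
  have hTne : ∀ w₁ w₂ : ℝ, {r : ℝ | ∃ pq ∈ S, r = w₁ * pq.1 + w₂ * pq.2}.Nonempty := by
    intro w₁ w₂
    obtain ⟨s, hs⟩ := hS
    exact ⟨w₁ * s.1 + w₂ * s.2, s, hs, rfl⟩
  have hTbdd : ∀ w₁ w₂ : ℝ, 0 ≤ w₁ → 0 ≤ w₂ →
      BddBelow {r : ℝ | ∃ pq ∈ S, r = w₁ * pq.1 + w₂ * pq.2} := by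
    intro w₁ w₂ hw1 hw2
    refine ⟨0, ?_⟩
    rintro r ⟨pq, hpq, rfl⟩
    positivity
  constructor
  · -- forward direction: the hull is contained in the set defined by the conditions
    intro hm
    set D : Set (ℝ × ℝ) := {x | 0 ≤ x.1 ∧ 0 ≤ x.2 ∧
      ∀ w₁ w₂ : ℝ, 0 ≤ w₁ → 0 ≤ w₂ →
        sInf {r : ℝ | ∃ pq ∈ S, r = w₁ * pq.1 + w₂ * pq.2} ≤ w₁ * x.1 + w₂ * x.2} with hDdef
    have hDconv : Convex ℝ D := by
      intro x hx y hy a b ha hb hab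
      obtain ⟨hx1, hx2, hx3⟩ := hx
      obtain ⟨hy1, hy2, hy3⟩ := hy
      have e1 : (a • x + b • y).1 = a * x.1 + b * y.1 := rfl
      have e2 : (a • x + b • y).2 = a * x.2 + b * y.2 := rfl
      refine ⟨by rw [e1]; exact add_nonneg (mul_nonneg ha hx1) (mul_nonneg hb hy1),
        by rw [e2]; exact add_nonneg (mul_nonneg ha hx2) (mul_nonneg hb hy2), ?_⟩
      intro w₁ w₂ hw1 hw2
      have h3x := hx3 w₁ w₂ hw1 hw2
      have h3y := hy3 w₁ w₂ hw1 hw2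
      rw [e1, e2]
      have h4 : a * sInf {r : ℝ | ∃ pq ∈ S, r = w₁ * pq.1 + w₂ * pq.2}
          + b * sInf {r : ℝ | ∃ pq ∈ S, r = w₁ * pq.1 + w₂ * pq.2}
          = sInf {r : ℝ | ∃ pq ∈ S, r = w₁ * pq.1 + w₂ * pq.2} := by
        rw [← add_mul, hab, one_mul]
      nlinarith [mul_le_mul_of_nonneg_left h3x ha, mul_le_mul_of_nonneg_left h3y hb, h4]
    have hsub : toR2 S + quadrant ⊆ D := by
      rintro x ⟨p, ⟨s, hs, rfl⟩, q, hq, rfl⟩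
      have hs1 : (0 : ℝ) ≤ s.1 := Nat.cast_nonneg _
      have hs2 : (0 : ℝ) ≤ s.2 := Nat.cast_nonneg _
      refine ⟨add_nonneg hs1 hq.1, add_nonneg hs2 hq.2, ?_⟩
      intro w₁ w₂ hw1 hw2
      have hmem : w₁ * s.1 + w₂ * s.2 ∈
          {r : ℝ | ∃ pq ∈ S, r = w₁ * pq.1 + w₂ * pq.2} := ⟨s, hs, rfl⟩
      have h1 := csInf_le (hTbdd w₁ w₂ hw1 hw2) hmem
      have h2 : w₁ * s.1 + w₂ * s.2 ≤ w₁ * (s.1 + q.1) + w₂ * (s.2 + q.2) := by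
        nlinarith [mul_nonneg hw1 hq.1, mul_nonneg hw2 hq.2]
      exact le_trans h1 (le_trans h2 (le_of_eq rfl))
    exact convexHull_min hsub hDconv hm
  · -- reverse direction: separation
    rintro ⟨hm1, hm2, hcond⟩
    by_contra hmem
    rw [hC_eq] at hmem
    obtain ⟨f, u, hfm, hfC⟩ := geometric_hahn_banach_point_closed hC_convex hC_closed hmem
    set w₁ := f (1, 0) with hw1def
    set w₂ := f (0, 1) with hw2def
    have hf : ∀ y : ℝ × ℝ, f y = w₁ * y.1 + w₂ * y.2 := by
      intro y
      have hy : y = y.1 • ((1 : ℝ), (0 : ℝ)) + y.2 • ((0 : ℝ), (1 : ℝ)) := by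
        simp [Prod.ext_iff]
      conv_lhs => rw [hy]
      rw [map_add, map_smul, map_smul, smul_eq_mul, smul_eq_mul]
      ring
    -- points of toR2 S lie in the separated set
    have hpt : ∀ s ∈ S, ∀ q ∈ quadrant,
        (((s.1 : ℝ), (s.2 : ℝ)) : ℝ × ℝ) + q ∈ convexHull ℝ (toR2 M) + quadrant := by
      intro s hs q hq
      have : (((s.1 : ℝ), (s.2 : ℝ)) : ℝ × ℝ) + q ∈ toR2 S + quadrant :=
        ⟨_, ⟨s, hs, rfl⟩, q, hq, rfl⟩
      have := subset_convexHull ℝ _ this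
      rwa [hC_eq] at this
    obtain ⟨s₀, hs₀⟩ := hS
    have hc0 : ∀ t : ℝ, 0 ≤ t → u < f (((s₀.1 : ℝ), (s₀.2 : ℝ)) + (t, 0)) := fun t ht =>
      hfC _ (hpt s₀ hs₀ (t, 0) ⟨ht, le_refl 0⟩)
    have hc0' : ∀ t : ℝ, 0 ≤ t → u < f (((s₀.1 : ℝ), (s₀.2 : ℝ)) + (0, t)) := fun t ht =>
      hfC _ (hpt s₀ hs₀ (0, t) ⟨le_refl 0, ht⟩)
    have hfc : u < f ((s₀.1 : ℝ), (s₀.2 : ℝ)) := by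
      have := hc0 0 le_rfl
      simpa using this
    -- w₁ ≥ 0
    have hw1 : 0 ≤ w₁ := by
      by_contra hw
      push_neg at hw
      set t : ℝ := (f ((s₀.1 : ℝ), (s₀.2 : ℝ)) - u) / (-w₁) with htdef
      have ht : 0 ≤ t := le_of_lt (div_pos (by linarith) (by linarith))
      have h1 := hc0 t ht
      have h2 : f (((s₀.1 : ℝ), (s₀.2 : ℝ)) + (t, 0)) = f ((s₀.1 : ℝ), (s₀.2 : ℝ)) + t * w₁ := by
        rw [hf, hf]
        simp only [Prod.fst_add, Prod.snd_add]
        ring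
      have h3 : t * (-w₁) = f ((s₀.1 : ℝ), (s₀.2 : ℝ)) - u :=
        div_mul_cancel₀ _ (by linarith)
      rw [h2] at h1
      nlinarith
    have hw2 : 0 ≤ w₂ := by
      by_contra hw
      push_neg at hw
      set t : ℝ := (f ((s₀.1 : ℝ), (s₀.2 : ℝ)) - u) / (-w₂) with htdef
      have ht : 0 ≤ t := le_of_lt (div_pos (by linarith) (by linarith))
      have h1 := hc0' t ht
      have h2 : f (((s₀.1 : ℝ), (s₀.2 : ℝ)) + (0, t)) = f ((s₀.1 : ℝ), (s₀.2 : ℝ)) + t * w₂ := by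
        rw [hf, hf]
        simp only [Prod.fst_add, Prod.snd_add]
        ring
      have h3 : t * (-w₂) = f ((s₀.1 : ℝ), (s₀.2 : ℝ)) - u :=
        div_mul_cancel₀ _ (by linarith)
      rw [h2] at h1
      nlinarith
    -- u is a lower bound of the tropical set
    have hub : u ≤ sInf {r : ℝ | ∃ pq ∈ S, r = w₁ * pq.1 + w₂ * pq.2} := by
      apply le_csInf (hTne w₁ w₂)
      rintro r ⟨pq, hpq, rfl⟩
      have hp := hfC _ (hpt pq hpq 0 zero_mem_quadrant)
      rw [add_zero, hf] at hp
      exact le_of_lt hp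
    have hfin := hcond w₁ w₂ hw1 hw2
    rw [hf m] at hfm
    linarith
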